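/- Let F ⊆ ℝ be closed and quasi-dense (for every x ∈ F and open U ∋ x, ℓ(F∩U) > 0). Fix a ∈ ℝ and define f(x) = ℓ([a,x] ∩ F) for x ≥ a and f(x) = −ℓ([x,a] ∩ F) for x < a. Then f is a monotone 1-Lipschitz function with 𝕃ip f = χ_F, the characteristic function of F. -/

import Mathlib

open scoped Classical
open Filter Metric Topology MeasureTheory Set ENNReal

/-- The local Lipschitz derivative. -/
noncomputable def LLip {X Y : Type*} [MetricSpace X] [MetricSpace Y] (f : X → Y) (x : X) : ℝ≥0∞ :=
  ⨅ (r : ℝ) (_ : 0 < r), ⨆ (u : X) (_ : u ∈ ball x r) (v : X) (_ : v ∈ ball x r) (_ : u ≠ v),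
    ENNReal.ofReal (dist (f u) (f v) / dist u v)

lemma meas_icc_ioc (F : Set ℝ) (x y : ℝ) :
    volume (Icc x y ∩ F) = volume (Ioc x y ∩ F) :=
  (measure_congr (Ioc_ae_eq_Icc.inter (Filter.EventuallyEq.refl _ _))).symm

lemma meas_split (F : Set ℝ) (hF : MeasurableSet F) {x y z : ℝ} (hxy : x ≤ y) (hyz : y ≤ z) :
    volume (Icc x z ∩ F) = volume (Icc x y ∩ F) + volume (Icc y z ∩ F) := by
  rw [meas_icc_ioc F y z, ← Icc_union_Ioc_eq_Icc hxy hyz, union_inter_distrib_right]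
  exact measure_union (((Set.Iic_disjoint_Ioc le_rfl).mono Set.Icc_subset_Iic_self le_rfl).mono
    inter_subset_left inter_subset_left) ((measurableSet_Ioc).inter hF)

lemma meas_fin (F : Set ℝ) (x y : ℝ) : volume (Icc x y ∩ F) ≠ ⊤ :=
  ((measure_mono inter_subset_left).trans_lt measure_Icc_lt_top).ne

theorem qDense_monotone_LLip_one (F : Set ℝ) (hF : IsClosed F)
    (hq : ∀ x ∈ F, ∀ U : Set ℝ, IsOpen U → x ∈ U → 0 < volume (F ∩ U))
    (a : ℝ)
    (f : ℝ → ℝ)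
    (hf : f = fun x => if a ≤ x then (volume (Set.Icc a x ∩ F)).toReal
      else -(volume (Set.Icc x a ∩ F)).toReal) :
    Monotone f ∧ LipschitzWith 1 f ∧
      ∀ x, LLip f x = (if x ∈ F then 1 else 0) := by
  have hFm : MeasurableSet F := hF.measurableSet
  -- key increment formula
  have hkey : ∀ x y : ℝ, x ≤ y → f y = f x + (volume (Icc x y ∩ F)).toReal := by
    intro x y hxy
    subst hf
    by_cases hax : a ≤ x
    · simp only [hax, hax.trans hxy, if_pos]
      rw [meas_split F hFm hax hxy, ENNReal.toReal_add (meas_fin F a x) (meas_fin F x y)]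
    · push_neg at hax
      by_cases hay : a ≤ y
      · simp only [hax.not_ge, hay, if_pos, if_neg, not_false_iff]
        rw [meas_split F hFm hax.le hay, ENNReal.toReal_add (meas_fin F x a) (meas_fin F a y)]
        ring
      · push_neg at hay
        simp only [hax.not_ge, hay.not_ge, if_neg, not_false_iff]
        rw [meas_split F hFm hxy hay.le, ENNReal.toReal_add (meas_fin F x y) (meas_fin F y a)]
        ring
  have hmono : Monotone f := by
    intro x y hxy
    rw [hkey x y hxy]
    exact le_add_of_nonneg_right ENNReal.toReal_nonneg
  have hdiff : ∀ x y : ℝ, x ≤ y → f y - f x ≤ y - x := by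
    intro x y hxy
    rw [hkey x y hxy, add_sub_cancel_left]
    calc (volume (Icc x y ∩ F)).toReal ≤ (volume (Icc x y)).toReal :=
          ENNReal.toReal_mono measure_Icc_lt_top.ne (measure_mono inter_subset_left)
      _ = y - x := by rw [Real.volume_Icc, ENNReal.toReal_ofReal (by linarith)]
  have hlip : LipschitzWith 1 f := by
    rw [lipschitzWith_iff_dist_le_mul]
    intro x y
    rcases le_total x y with h | h
    · rw [Real.dist_eq, Real.dist_eq, abs_of_nonpos (by linarith [hmono h]),
        abs_of_nonpos (by linarith)]
      simpa using hdiff x y h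
    · rw [Real.dist_eq, Real.dist_eq, abs_of_nonneg (by linarith [hmono h]),
        abs_of_nonneg (by linarith)]
      simpa using hdiff y x h
  refine ⟨hmono, hlip, fun x => ?_⟩
  -- general upper bound: the iSup for any radius is at most 1
  have hsup_le : ∀ (x : ℝ) (r : ℝ),
      (⨆ (u : ℝ) (_ : u ∈ ball x r) (v : ℝ) (_ : v ∈ ball x r) (_ : u ≠ v),
        ENNReal.ofReal (dist (f u) (f v) / dist u v)) ≤ 1 := by
    intro x r
    refine iSup_le fun u => iSup_le fun _ => iSup_le fun v => iSup_le fun _ => iSup_le fun huv => ?_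
    rw [ENNReal.ofReal_le_one]
    rw [div_le_one (dist_pos.2 huv)]
    simpa using hlip.dist_le_mul u v
  by_cases hx : x ∈ F
  · rw [if_pos hx]
    refine le_antisymm ((iInf₂_le (1 : ℝ) one_pos).trans (hsup_le x 1)) ?_
    refine le_iInf₂ fun r hr => ?_
    set S := ⨆ (u : ℝ) (_ : u ∈ ball x r) (v : ℝ) (_ : v ∈ ball x r) (_ : u ≠ v),
        ENNReal.ofReal (dist (f u) (f v) / dist u v) with hS
    by_contra hlt
    push_neg at hlt
    have hSne : S ≠ ⊤ := (hlt.trans one_lt_top).ne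
    set ε : ℝ := (1 - S.toReal) / 2 with hε
    have hS1 : S.toReal < 1 := by
      have := ENNReal.toReal_lt_toReal hSne one_ne_top |>.2 hlt
      simpa using this
    have hε0 : 0 < ε := by rw [hε]; linarith
    have h1ε : S.toReal < 1 - ε := by rw [hε]; linarith
    have hε1 : ε < 1 := by rw [hε]; nlinarith [ENNReal.toReal_nonneg (a := S)]
    have hSlt : S < ENNReal.ofReal (1 - ε) := by
      rw [← ENNReal.ofReal_toReal hSne]
      exact (ENNReal.ofReal_lt_ofReal_iff (by linarith)).2 h1ε
    -- now find u, v with ratio ≥ 1 - ε, contradiction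
    set s : Set ℝ := F ∩ ball x r with hs
    have hsm : MeasurableSet s := hFm.inter measurableSet_ball
    have hspos : volume s ≠ 0 := (hq x hx (ball x r) isOpen_ball (mem_ball_self hr)).ne'
    have hae : ∀ᵐ y ∂(volume.restrict s),
        Tendsto (fun h => volume (s ∩ closedBall y h) / volume (closedBall y h)) (𝓝[>] 0)
          (𝓝 1) := by
      filter_upwards [ae_restrict_of_ae
        (Besicovitch.ae_tendsto_measure_inter_div_of_measurableSet volume hsm),
        ae_restrict_mem hsm] with y hy hys
      simpa [Set.indicator_of_mem hys] using hy
    obtain ⟨y, hys, hyd⟩ := MeasureTheory.Measure.exists_mem_of_measure_ne_zero_of_ae hspos hae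
    have hyball : y ∈ ball x r := hys.2
    have hδ : 0 < r - dist y x := by simpa [mem_ball] using hyball
    have hev : ∀ᶠ h in 𝓝[>] (0:ℝ),
        ENNReal.ofReal (1 - ε) < volume (s ∩ closedBall y h) / volume (closedBall y h) :=
      hyd.eventually_const_lt (by
        rw [← ENNReal.ofReal_one]
        exact ENNReal.ofReal_lt_ofReal_iff one_pos |>.2 (by linarith))
    have hev2 : ∀ᶠ h in 𝓝[>] (0:ℝ), h < r - dist y x :=
      eventually_nhdsWithin_of_eventually_nhds (Filter.Tendsto.eventually_lt_const hδ tendsto_id)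
    obtain ⟨h, hh1, hh2, hh0⟩ := (hev.and (hev2.and self_mem_nhdsWithin)).exists
    replace hh0 : 0 < h := hh0
    -- the pair u = y - h, v = y + h
    have hcb : closedBall y h ⊆ ball x r := by
      intro z hz
      rw [mem_ball]
      calc dist z x ≤ dist z y + dist y x := dist_triangle z y x
        _ ≤ h + dist y x := by
            have := mem_closedBall.1 hz; linarith
        _ < r := by linarith
    have hcbIcc : closedBall y h = Icc (y - h) (y + h) := Real.closedBall_eq_Icc
    have hvol_cb : volume (closedBall y h) = ENNReal.ofReal (2 * h) := by
      rw [hcbIcc, Real.volume_Icc]; ring_nf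
    -- from the density bound
    have hmul : ENNReal.ofReal (1 - ε) * ENNReal.ofReal (2 * h)
        < volume (s ∩ closedBall y h) := by
      rw [← hvol_cb]
      exact (ENNReal.lt_div_iff_mul_lt
        (Or.inl (by rw [hvol_cb]; exact (ENNReal.ofReal_pos.2 (by linarith)).ne'))
        (Or.inl (by rw [hvol_cb]; exact ofReal_ne_top))).1 hh1
    have hsub : s ∩ closedBall y h ⊆ Icc (y - h) (y + h) ∩ F := by
      rw [hcbIcc]
      exact fun z hz => ⟨hz.2, hz.1.1⟩
    have hfinsub : volume (s ∩ closedBall y h) ≠ ⊤ :=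
      ((measure_mono hsub).trans_lt (meas_fin F (y - h) (y + h) |>.lt_top)).ne
    have hlow : (1 - ε) * (2 * h) < (volume (Icc (y - h) (y + h) ∩ F)).toReal := by
      have h1 : ((ENNReal.ofReal (1 - ε) * ENNReal.ofReal (2 * h))).toReal = (1 - ε) * (2 * h) := by
        rw [← ENNReal.ofReal_mul (by linarith)]
        exact ENNReal.toReal_ofReal (by nlinarith)
      calc (1 - ε) * (2 * h) = _ := h1.symm
        _ < (volume (s ∩ closedBall y h)).toReal :=
            ENNReal.toReal_strict_mono hfinsub hmul
        _ ≤ _ := ENNReal.toReal_mono (meas_fin F _ _) (measure_mono hsub)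
    -- now the ratio at u = y - h, v = y + h
    have huv : y - h ≠ y + h := by intro hc; linarith
    have huball : y - h ∈ ball x r := hcb (by
      rw [mem_closedBall, Real.dist_eq, show y - h - y = -h by ring, abs_neg,
        abs_of_nonneg hh0.le])
    have hvball : y + h ∈ ball x r := hcb (by
      rw [mem_closedBall, Real.dist_eq, show y + h - y = h by ring, abs_of_nonneg hh0.le])
    have hle : y - h ≤ y + h := by linarith
    have hduv : dist (y - h) (y + h) = 2 * h := by
      rw [Real.dist_eq, abs_of_nonpos] <;> ring_nf <;> linarith
    have hratio : 1 - ε ≤ dist (f (y - h)) (f (y + h)) / dist (y - h) (y + h) := by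
      rw [hduv, Real.dist_eq, abs_of_nonpos (by linarith [hmono hle]),
        le_div_iff₀ (by linarith)]
      have := hkey (y - h) (y + h) hle
      nlinarith [hlow]
    have hterm : ENNReal.ofReal (1 - ε) ≤ S := by
      rw [hS]
      refine le_iSup_of_le (y - h) (le_iSup_of_le huball (le_iSup_of_le (y + h)
        (le_iSup_of_le hvball (le_iSup_of_le huv ?_))))
      exact ENNReal.ofReal_le_ofReal hratio
    exact absurd (hterm.trans_lt hSlt) (lt_irrefl _)
  · rw [if_neg hx]
    obtain ⟨r, hr, hrF⟩ := Metric.isOpen_iff.1 hF.isOpen_compl x hx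
    refine le_antisymm ?_ (zero_le)
    refine (iInf₂_le r hr).trans ?_
    refine iSup_le fun u => iSup_le fun hu => iSup_le fun v => iSup_le fun hv => iSup_le fun huv => ?_
    have hfu : f u = f v := by
      have hord : (ball x r).OrdConnected := (convex_ball x r).ordConnected
      rcases le_total u v with h | h
      · have he : Icc u v ∩ F = ∅ := by
          rw [eq_empty_iff_forall_notMem]
          rintro z ⟨hz1, hz2⟩
          exact hrF (hord.out hu hv hz1) hz2
        rw [hkey u v h, he]; simp
      · have he : Icc v u ∩ F = ∅ := by
          rw [eq_empty_iff_forall_notMem]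
          rintro z ⟨hz1, hz2⟩
          exact hrF (hord.out hv hu hz1) hz2
        rw [hkey v u h, he]; simp
    simp [hfu, dist_self]
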